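/- Let q ≥ 2 be an integer and a ∈ [q], and let σ_1,…,σ_a, τ_1,…,τ_a be even nonnegative integers. If ∑_{j=1}^a (−q)^{σ_j} = ∑_{j=1}^a (−q)^{τ_j}, then the multisets {σ_1,…,σ_a} and {τ_1,…,τ_a} are equal. -/

import Mathlib

lemma pow_sum_decomp (Q : ℕ) (s : Multiset ℕ) :
    (s.map (Q ^ ·)).sum =
      s.count 0 + Q * ((s.filter (0 < ·)).map (fun e => Q ^ (e - 1))).sum := by
  induction s using Multiset.induction with
  | empty => simp
  | cons a s ih =>
    rcases Nat.eq_zero_or_pos a with rfl | ha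
    · simp [ih]; ring
    · rw [Multiset.map_cons, Multiset.sum_cons, ih,
        Multiset.filter_cons_of_pos (p := fun x => 0 < x) s ha,
        Multiset.map_cons, Multiset.sum_cons,
        Multiset.count_cons_of_ne ha.ne]
      have : Q ^ a = Q * Q ^ (a - 1) := by
        rw [← pow_succ']
        congr 1
        omega
      rw [this]; ring

lemma key (Q : ℕ) (hQ : 2 ≤ Q) : ∀ n (s t : Multiset ℕ), (s.map (Q ^ ·)).sum = n →
    s.card < Q → t.card < Q → (s.map (Q ^ ·)).sum = (t.map (Q ^ ·)).sum → s = t := by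
  intro n
  induction n using Nat.strong_induction_on with
  | _ n ih =>
    intro s t hn hs ht hsum
    have hds := pow_sum_decomp Q s
    have hdt := pow_sum_decomp Q t
    set k := s.count 0 with hk
    set l := t.count 0 with hl
    set A := ((s.filter (0 < ·)).map (fun e => Q ^ (e - 1))).sum with hA
    set B := ((t.filter (0 < ·)).map (fun e => Q ^ (e - 1))).sum with hB
    have hkQ : k < Q := lt_of_le_of_lt (Multiset.count_le_card 0 s) hs
    have hlQ : l < Q := lt_of_le_of_lt (Multiset.count_le_card 0 t) ht
    have h1 : k + Q * A = l + Q * B := by rw [← hds, ← hdt, hsum]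
    have hkl : k = l := by
      have h2 : (k + Q * A) % Q = (l + Q * B) % Q := by rw [h1]
      rwa [Nat.add_mul_mod_self_left, Nat.add_mul_mod_self_left,
        Nat.mod_eq_of_lt hkQ, Nat.mod_eq_of_lt hlQ] at h2
    have hAB : A = B := by
      have h2 : Q * A = Q * B := by omega
      exact Nat.eq_of_mul_eq_mul_left (by omega) h2
    -- split s and t
    have hsplit : ∀ u : Multiset ℕ, u = Multiset.replicate (u.count 0) 0 + u.filter (0 < ·) := by
      intro u
      conv_lhs => rw [← Multiset.filter_add_not (· = 0) u]
      congr 1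
      · rw [Multiset.filter_eq']
      · apply Multiset.filter_congr
        intro x _
        simp [Nat.pos_iff_ne_zero]
    rcases Nat.eq_zero_or_pos A with hA0 | hApos
    · -- both filtered parts empty
      have hsf : s.filter (0 < ·) = 0 := by
        by_contra hne
        obtain ⟨x, hx⟩ := Multiset.exists_mem_of_ne_zero hne
        have : 0 < Q ^ (x - 1) := pow_pos (by omega) _
        have hle : Q ^ (x - 1) ≤ A :=
          Multiset.single_le_sum (by intro y hy; positivity) _
            (Multiset.mem_map_of_mem _ hx)
        omega
      have htf : t.filter (0 < ·) = 0 := by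
        by_contra hne
        obtain ⟨x, hx⟩ := Multiset.exists_mem_of_ne_zero hne
        have : 0 < Q ^ (x - 1) := pow_pos (by omega) _
        have hle : Q ^ (x - 1) ≤ B :=
          Multiset.single_le_sum (by intro y hy; positivity) _
            (Multiset.mem_map_of_mem _ hx)
        omega
      rw [hsplit s, hsplit t, hsf, htf, ← hk, ← hl, hkl]
    · -- recurse
      have hcard_s : (((s.filter (0 < ·)).map (· - 1)).card) < Q :=
        lt_of_le_of_lt (by rw [Multiset.card_map]; exact Multiset.card_le_card (Multiset.filter_le _ _)) hs
      have hcard_t : (((t.filter (0 < ·)).map (· - 1)).card) < Q :=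
        lt_of_le_of_lt (by rw [Multiset.card_map]; exact Multiset.card_le_card (Multiset.filter_le _ _)) ht
      have hmap : ∀ u : Multiset ℕ,
          ((u.filter (0 < ·)).map (· - 1)).map (Q ^ ·) = (u.filter (0 < ·)).map (fun e => Q ^ (e - 1)) := by
        intro u; rw [Multiset.map_map]; rfl
      have hlt : A < n := by
        have h3 : n = k + Q * A := by rw [← hn, hds]
        have h4 : A < Q * A := by nlinarith
        omega
      have heq := ih A hlt ((s.filter (0 < ·)).map (· - 1)) ((t.filter (0 < ·)).map (· - 1))
        (by rw [hmap]) hcard_s hcard_t (by rw [hmap, hmap, ← hA, ← hB, hAB])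
      have hrec : ∀ u : Multiset ℕ, ((u.filter (0 < ·)).map (· - 1)).map (· + 1) = u.filter (0 < ·) := by
        intro u
        rw [Multiset.map_map]
        rw [show (· + 1) ∘ (· - 1) = fun x : ℕ => x - 1 + 1 from rfl]
        conv_rhs => rw [← Multiset.map_id (u.filter (0 < ·))]
        apply Multiset.map_congr rfl
        intro x hx
        have := Multiset.of_mem_filter hx
        simp; omega
      have hfeq : s.filter (0 < ·) = t.filter (0 < ·) := by
        rw [← hrec s, ← hrec t, heq]
      rw [hsplit s, hsplit t, ← hk, ← hl, hkl, hfeq]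

/-- the signed-powers lemma with even exponents.  If `q ≥ 2`, `a ∈ [q]`,
all `σ_j, τ_j` are even, and `∑_j (−q)^{σ_j} = ∑_j (−q)^{τ_j}`, then the multisets of
exponents are equal. -/
theorem stmt12 (q a : ℕ) (hq : 2 ≤ q) (ha1 : 1 ≤ a) (ha2 : a ≤ q)
    (σ τ : Fin a → ℕ) (hσ : ∀ j, Even (σ j)) (hτ : ∀ j, Even (τ j))
    (h : ∑ j : Fin a, (-(q : ℤ)) ^ (σ j) = ∑ j : Fin a, (-(q : ℤ)) ^ (τ j)) :
    Multiset.map σ Finset.univ.val = Multiset.map τ Finset.univ.val := by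
  have hpow : ∀ (e : ℕ), Even e → (-(q:ℤ)) ^ e = ((q^2 : ℕ) : ℤ) ^ (e / 2) := by
    intro e ⟨m, hm⟩
    subst hm
    have h2 : (m + m) / 2 = m := by omega
    rw [h2]
    push_cast
    rw [← pow_mul]
    rw [show 2 * m = m + m by ring]
    rw [neg_pow, Even.neg_one_pow ⟨m, rfl⟩, one_mul]
  have hnat : ∑ j : Fin a, (q^2) ^ (σ j / 2) = ∑ j : Fin a, (q^2) ^ (τ j / 2) := by
    have : ((∑ j : Fin a, (q^2) ^ (σ j / 2) : ℕ) : ℤ) = ((∑ j : Fin a, (q^2) ^ (τ j / 2) : ℕ) : ℤ) := by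
      push_cast
      calc (∑ j : Fin a, ((q:ℤ)^2) ^ (σ j / 2)) = ∑ j : Fin a, (-(q:ℤ)) ^ (σ j) := by
            refine Finset.sum_congr rfl fun j _ => ?_
            rw [hpow _ (hσ j)]; push_cast; ring
        _ = ∑ j : Fin a, (-(q:ℤ)) ^ (τ j) := h
        _ = ∑ j : Fin a, ((q:ℤ)^2) ^ (τ j / 2) := by
            refine Finset.sum_congr rfl fun j _ => ?_
            rw [hpow _ (hτ j)]; push_cast; ring
    exact_mod_cast this
  have hQ : 2 ≤ q ^ 2 := le_trans hq (Nat.le_self_pow (by norm_num) q)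
  have haQ : a < q ^ 2 := lt_of_le_of_lt ha2 (by nlinarith)
  have hmain := key (q^2) hQ _ (Multiset.map (fun j => σ j / 2) Finset.univ.val)
    (Multiset.map (fun j => τ j / 2) Finset.univ.val) rfl
    (by simpa using haQ) (by simpa using haQ) ?_
  · have hms : ∀ (f : Fin a → ℕ), (∀ j, Even (f j)) →
        (Multiset.map (fun j => f j / 2) Finset.univ.val).map (fun x => 2 * x)
          = Multiset.map f Finset.univ.val := by
      intro f hf
      rw [Multiset.map_map]
      apply Multiset.map_congr rfl
      intro j _
      obtain ⟨m, hm⟩ := hf j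
      simp [Function.comp, hm]
      omega
    rw [← hms σ hσ, ← hms τ hτ, hmain]
  · rw [Multiset.map_map, Multiset.map_map]
    exact hnat
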